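/- arXiv:0710.2506 — 2 statements merged into one kernel-verified Lean document; each statement's English description precedes it below -/
import Mathlib

section
/- Let T > 0 and let (m̃_k)_{k ≥ 1} be a sequence in L²((0, T)). Suppose (y_α)_{α} is a family of functions in L²((0, T)), indexed by multi-indices α, satisfying for every multi-index α and almost every t ∈ (0, T): y_α(t) = Σ_{k ≥ 1} √(α_k) ∫_0^t y_{α−ε_k}(s) m̃_k(s) ds (the sum has only finitely many non-zero terms since √(α_k) = 0 unless α_k ≥ 1). Then y_α = 0 almost everywhere on (0, T) for every multi-index α. In particular, the solution of the Itô–Skorokhod equation u(t) = 1 + 𝔛_t^⋄(u) is unique in L²((0, T); L²(Ω)), since the chaos coefficients of the difference of two solutions satisfy this homogeneous system. -/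
open MeasureTheory Set

/-- Uniqueness for the homogeneous propagator system: if the chaos
coefficients `y_α ∈ L²((0,T))` satisfy, for a.e. `t ∈ (0,T)`,
`y_α(t) = Σ_k √(α_k) ∫_0^t y_{α−ε_k}(s) m̃_k(s) ds` (a finite sum over the support of
`α`, the empty sum for the zero multi-index), then every `y_α` vanishes a.e. In
particular the solution of the Itô–Skorokhod equation `u(t) = 1 + 𝔛_t^⋄(u)` is unique
in `L²((0,T); L²(Ω))`. -/
theorem propagator_system_uniqueness
    (T : ℝ) (hT : 0 < T) (mt : ℕ → ℝ → ℝ)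
    (hmt : ∀ k, MemLp (mt k) 2 (volume.restrict (Ioo 0 T)))
    (y : (ℕ →₀ ℕ) → ℝ → ℝ)
    (hy : ∀ α, MemLp (y α) 2 (volume.restrict (Ioo 0 T)))
    (hsys : ∀ α : ℕ →₀ ℕ, ∀ᵐ t ∂(volume.restrict (Ioo 0 T)),
      y α t = ∑ k ∈ α.support, Real.sqrt (α k) *
        ∫ s in Ioo 0 t, y (α - Finsupp.single k 1) s * mt k s) :
    ∀ α : ℕ →₀ ℕ, ∀ᵐ t ∂(volume.restrict (Ioo 0 T)), y α t = 0 := by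
  suffices H : ∀ n (α : ℕ →₀ ℕ), (α.sum fun _ v => v) = n →
      ∀ᵐ t ∂(volume.restrict (Ioo 0 T)), y α t = 0 by
    exact fun α => H _ α rfl
  intro n
  induction n using Nat.strong_induction_on with
  | _ n ih =>
    intro α hα
    filter_upwards [hsys α, ae_restrict_mem measurableSet_Ioo] with t ht htT
    rw [ht]
    refine Finset.sum_eq_zero fun k hk => ?_
    -- degree of α - single k 1 is n - 1 < n
    have hk1 : 1 ≤ α k := Nat.one_le_iff_ne_zero.2 (Finsupp.mem_support_iff.1 hk)
    have hle : Finsupp.single k 1 ≤ α := by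
      intro j
      by_cases hj : j = k
      · subst hj; simpa using hk1
      · simp [Finsupp.single_apply, Ne.symm hj]
    have hadd : (α - Finsupp.single k 1) + Finsupp.single k 1 = α :=
      tsub_add_cancel_of_le hle
    have hdeg : ((α - Finsupp.single k 1).sum fun _ v => v) + 1 = n := by
      have := congrArg (fun β : ℕ →₀ ℕ => β.sum fun _ v => v) hadd
      simpa [Finsupp.sum_add_index', Finsupp.sum_single_index, hα] using this
    have hβ : ((α - Finsupp.single k 1).sum fun _ v => v) < n := by omega
    have h0 := ih _ hβ (α - Finsupp.single k 1) rfl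
    -- the integrand vanishes a.e. on Ioo 0 t
    have hsub : Ioo (0:ℝ) t ⊆ Ioo 0 T := Ioo_subset_Ioo le_rfl htT.2.le
    have h0' : ∀ᵐ s ∂(volume.restrict (Ioo 0 t)),
        y (α - Finsupp.single k 1) s * mt k s = 0 := by
      have := h0.filter_mono (ae_mono (Measure.restrict_mono hsub le_rfl))
      filter_upwards [this] with s hs
      simp [hs]
    rw [integral_eq_zero_of_ae h0', mul_zero]
end

section
/- Let T > 0 and let (m̃_k)_{k ≥ 1} be a sequence in L²((0, T)). Define M̃_k(t) = ∫_0^t m̃_k(s) ds and, for each multi-index α, u_α(t) = (Π_{k ≥ 1} M̃_k(t)^{α_k}) / √(α!) (a finite product). Then u_𝟎(t) = 1 for the zero multi-index 𝟎, and for every multi-index α with |α| ≥ 1 and every t ∈ [0, T]: u_α(t) = Σ_{k ≥ 1} √(α_k) ∫_0^t u_{α−ε_k}(s) m̃_k(s) ds, where the sum has finitely many non-zero terms. In other words, the chaos coefficients of the Wick exponential e^{⋄X(t)} solve the propagator system of the Itô–Skorokhod equation u(t) = 1 + 𝔛_t^⋄(u). -/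
open MeasureTheory Set
lemma prim_contOn {t : ℝ} {f : ℝ → ℝ} (hf : IntegrableOn f (Ioo 0 t)) :
    ContinuousOn (fun x => ∫ s in Ioo 0 x, f s) (Icc 0 t) := by
  have hIcc : IntegrableOn f (Icc 0 t) := by
    rwa [IntegrableOn, ← Measure.restrict_congr_set Ioo_ae_eq_Icc]
  have h := intervalIntegral.continuousOn_primitive (a := 0) (b := t) hIcc
  refine ContinuousOn.congr h ?_
  intro x _
  exact (MeasureTheory.integral_Ioc_eq_integral_Ioo).symm

lemma prim_bound {t : ℝ} {f : ℝ → ℝ} (hf : IntegrableOn f (Ioo 0 t))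
    {x : ℝ} (hx : x ≤ t) : ‖∫ s in Ioo 0 x, f s‖ ≤ ∫ s in Ioo 0 t, ‖f s‖ := by
  refine (norm_integral_le_integral_norm _).trans ?_
  refine setIntegral_mono_set hf.norm ?_ ?_
  · exact Filter.Eventually.of_forall fun s => norm_nonneg _
  · exact HasSubset.Subset.eventuallyLE (Ioo_subset_Ioo le_rfl hx)

lemma prim_mul_integrable {t : ℝ} {f g : ℝ → ℝ}
    (hf : IntegrableOn f (Ioo 0 t)) (hg : IntegrableOn g (Ioo 0 t)) :
    IntegrableOn (fun x => (∫ s in Ioo 0 x, f s) * g x) (Ioo 0 t) := by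
  refine hg.bdd_mul (c := ∫ s in Ioo 0 t, ‖f s‖) ?_ ?_
  · exact ((prim_contOn hf).mono Ioo_subset_Icc_self).aestronglyMeasurable measurableSet_Ioo
  · refine (ae_restrict_iff' measurableSet_Ioo).2 (Filter.Eventually.of_forall fun x hx => ?_)
    exact prim_bound hf hx.2.le

lemma fubini_swap_key {t : ℝ} {f g : ℝ → ℝ}
    (hf : IntegrableOn f (Ioo 0 t)) (hg : IntegrableOn g (Ioo 0 t)) :
    ∫ x in Ioo 0 t, f x * (∫ s in Ico x t, g s)
      = ∫ y in Ioo 0 t, (∫ s in Ioo 0 y, f s) * g y := by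
  set μ := volume.restrict (Ioo (0:ℝ) t) with hμ
  set A : Set (ℝ × ℝ) := {p : ℝ × ℝ | p.1 ≤ p.2} with hA
  have hAmeas : MeasurableSet A := measurableSet_le measurable_fst measurable_snd
  set Φ : ℝ → ℝ → ℝ := fun x y => A.indicator (fun p => f p.1 * g p.2) (x, y) with hΦdef
  have hbase : Integrable (fun p : ℝ × ℝ => f p.1 * g p.2) (μ.prod μ) := hf.mul_prod hg
  have hΦint : Integrable (Function.uncurry Φ) (μ.prod μ) := by
    have : Function.uncurry Φ = A.indicator (fun p => f p.1 * g p.2) := by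
      funext p; cases p; rfl
    rw [this]
    exact hbase.indicator hAmeas
  have swap := MeasureTheory.integral_integral_swap hΦint
  calc ∫ x in Ioo 0 t, f x * (∫ s in Ico x t, g s)
      = ∫ x in Ioo 0 t, ∫ y in Ioo 0 t, Φ x y := by
        refine setIntegral_congr_fun measurableSet_Ioo fun x hx => ?_
        have : (fun y => Φ x y) = (Ici x).indicator (fun y => f x * g y) := by
          funext y
          simp only [hΦdef, hA, Set.indicator_apply, mem_setOf_eq, mem_Ici]
        rw [this, setIntegral_indicator measurableSet_Ici]
        have hset : Ioo 0 t ∩ Ici x = Ico x t := by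
          ext y
          simp only [mem_inter_iff, mem_Ioo, mem_Ici, mem_Ico]
          exact ⟨fun h => ⟨h.2, h.1.2⟩, fun h => ⟨⟨lt_of_lt_of_le hx.1 h.1, h.2⟩, h.1⟩⟩
        rw [hset, MeasureTheory.integral_const_mul]
    _ = ∫ y in Ioo 0 t, ∫ x in Ioo 0 t, Φ x y := swap
    _ = ∫ y in Ioo 0 t, (∫ s in Ioo 0 y, f s) * g y := by
        refine setIntegral_congr_fun measurableSet_Ioo fun y hy => ?_
        have : (fun x => Φ x y) = (Iic y).indicator (fun x => f x * g y) := by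
          funext x
          simp only [hΦdef, hA, Set.indicator_apply, mem_setOf_eq, mem_Iic]
        rw [this, setIntegral_indicator measurableSet_Iic]
        have hset : Ioo 0 t ∩ Iic y = Ioc 0 y := by
          ext x
          simp only [mem_inter_iff, mem_Ioo, mem_Iic, mem_Ioc]
          exact ⟨fun h => ⟨h.1.1, h.2⟩, fun h => ⟨⟨h.1, lt_of_le_of_lt h.2 hy.2⟩, h.2⟩⟩
        rw [hset, integral_mul_const, MeasureTheory.integral_Ioc_eq_integral_Ioo]

lemma fubini_ibp {t : ℝ} {f g : ℝ → ℝ}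
    (hf : IntegrableOn f (Ioo 0 t)) (hg : IntegrableOn g (Ioo 0 t)) :
    (∫ x in Ioo 0 t, f x) * (∫ y in Ioo 0 t, g y)
      = ∫ x in Ioo 0 t, ((∫ s in Ioo 0 x, f s) * g x + (∫ s in Ioo 0 x, g s) * f x) := by
  have int1 : IntegrableOn (fun x => (∫ s in Ioo 0 x, f s) * g x) (Ioo 0 t) :=
    prim_mul_integrable hf hg
  have int2 : IntegrableOn (fun x => (∫ s in Ioo 0 x, g s) * f x) (Ioo 0 t) :=
    prim_mul_integrable hg hf
  have int2' : IntegrableOn (fun x => f x * (∫ s in Ioo 0 x, g s)) (Ioo 0 t) := by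
    simpa [mul_comm] using int2
  have split : ∀ x ∈ Ioo (0:ℝ) t,
      (∫ y in Ioo 0 t, g y) = (∫ s in Ioo 0 x, g s) + ∫ s in Ico x t, g s := by
    intro x hx
    rw [← Ioo_union_Ico_eq_Ioo hx.1 hx.2.le,
      setIntegral_union (Disjoint.mono Ioo_subset_Iio_self Ico_subset_Ici_self
        (Iio_disjoint_Ici le_rfl)) measurableSet_Ico
        (hg.mono_set (Ioo_subset_Ioo le_rfl hx.2.le))
        (hg.mono_set (fun s hs => ⟨lt_of_lt_of_le hx.1 hs.1, hs.2⟩))]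
  have int3 : IntegrableOn (fun x => f x * (∫ s in Ico x t, g s)) (Ioo 0 t) := by
    refine (((hf.mul_const (∫ y in Ioo 0 t, g y)).sub int2').congr ?_)
    refine (ae_restrict_iff' measurableSet_Ioo).2 (Filter.Eventually.of_forall fun x hx => ?_)
    simp only [Pi.sub_apply]
    rw [split x hx]; ring
  calc (∫ x in Ioo 0 t, f x) * (∫ y in Ioo 0 t, g y)
      = ∫ x in Ioo 0 t, f x * (∫ y in Ioo 0 t, g y) := (integral_mul_const _ _).symm
    _ = ∫ x in Ioo 0 t, ((∫ s in Ioo 0 x, g s) * f x + f x * (∫ s in Ico x t, g s)) := by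
        refine setIntegral_congr_fun measurableSet_Ioo fun x hx => ?_
        rw [split x hx]; ring
    _ = (∫ x in Ioo 0 t, (∫ s in Ioo 0 x, g s) * f x)
          + ∫ x in Ioo 0 t, f x * (∫ s in Ico x t, g s) := integral_add int2 int3
    _ = (∫ x in Ioo 0 t, (∫ s in Ioo 0 x, g s) * f x)
          + ∫ y in Ioo 0 t, (∫ s in Ioo 0 y, f s) * g y := by
        rw [fubini_swap_key hf hg]
    _ = ∫ x in Ioo 0 t, ((∫ s in Ioo 0 x, f s) * g x + (∫ s in Ioo 0 x, g s) * f x) := by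
        rw [integral_add int1 int2]; ring

def RepOn (T : ℝ) (H h : ℝ → ℝ) : Prop :=
  IntegrableOn h (Ioo 0 T) ∧ ∀ t ≤ T, H t = ∫ s in Ioo 0 t, h s

lemma RepOn.mul {T : ℝ} {F f G g : ℝ → ℝ} (hF : RepOn T F f) (hG : RepOn T G g) :
    RepOn T (fun t => F t * G t) (fun s => F s * g s + G s * f s) := by
  obtain ⟨hfi, hFrep⟩ := hF
  obtain ⟨hgi, hGrep⟩ := hG
  have hFg : IntegrableOn (fun s => F s * g s) (Ioo 0 T) := by
    refine (prim_mul_integrable hfi hgi).congr ?_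
    refine (ae_restrict_iff' measurableSet_Ioo).2 (Filter.Eventually.of_forall fun s hs => ?_)
    simp only [hFrep s hs.2.le]
  have hGf : IntegrableOn (fun s => G s * f s) (Ioo 0 T) := by
    refine (prim_mul_integrable hgi hfi).congr ?_
    refine (ae_restrict_iff' measurableSet_Ioo).2 (Filter.Eventually.of_forall fun s hs => ?_)
    simp only [hGrep s hs.2.le]
  refine ⟨hFg.add hGf, fun t ht => ?_⟩
  have hf' : IntegrableOn f (Ioo 0 t) := hfi.mono_set (Ioo_subset_Ioo le_rfl ht)
  have hg' : IntegrableOn g (Ioo 0 t) := hgi.mono_set (Ioo_subset_Ioo le_rfl ht)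
  simp only
  rw [hFrep t ht, hGrep t ht, fubini_ibp hf' hg']
  refine setIntegral_congr_fun measurableSet_Ioo fun s hs => ?_
  simp only [hFrep s (hs.2.le.trans ht), hGrep s (hs.2.le.trans ht)]

lemma Qadd (M : ℕ → ℝ → ℝ) (s : ℝ) (β γ : ℕ →₀ ℕ) :
    ((β + γ).prod fun i n => M i s ^ n)
      = (β.prod fun i n => M i s ^ n) * (γ.prod fun i n => M i s ^ n) :=
  Finsupp.prod_add_index' (fun _ => pow_zero _) (fun a m n => pow_add _ _ _)

lemma Qsingle (M : ℕ → ℝ → ℝ) (s : ℝ) (k : ℕ) :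
    ((Finsupp.single k 1).prod fun i n => M i s ^ n) = M k s := by
  have h := Finsupp.prod_single_index (a := k) (b := 1) (h := fun i n => M i s ^ n) (pow_zero _)
  rw [h]; simp

lemma aux_sub_add (α : ℕ →₀ ℕ) (k : ℕ) (hk : k ∈ α.support) :
    α - Finsupp.single k 1 + Finsupp.single k 1 = α := by
  have hα : 1 ≤ α k := Nat.one_le_iff_ne_zero.2 (Finsupp.mem_support_iff.1 hk)
  ext j
  simp only [Finsupp.add_apply, Finsupp.tsub_apply, Finsupp.single_apply]
  by_cases h : k = j
  · subst h; simp; omega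
  · simp [h]

lemma aux_sub_swap (β : ℕ →₀ ℕ) (j k : ℕ) (hj : j ∈ β.support) :
    (β + Finsupp.single k 1) - Finsupp.single j 1
      = (β - Finsupp.single j 1) + Finsupp.single k 1 := by
  have hβ : 1 ≤ β j := Nat.one_le_iff_ne_zero.2 (Finsupp.mem_support_iff.1 hj)
  ext i
  simp only [Finsupp.add_apply, Finsupp.tsub_apply, Finsupp.single_apply]
  by_cases h2 : j = i
  · subst h2
    by_cases h1 : k = j <;> simp [h1] <;> omega
  · by_cases h1 : k = i <;> simp [h1, h2]

lemma density_step (M m : ℕ → ℝ → ℝ) (β : ℕ →₀ ℕ) (k : ℕ) (s : ℝ) :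
    (∑ j ∈ (β + Finsupp.single k 1).support, (((β + Finsupp.single k 1 : ℕ →₀ ℕ) j : ℕ) : ℝ)
        * (((β + Finsupp.single k 1) - Finsupp.single j 1).prod fun i n => M i s ^ n) * m j s)
      = M k s * (∑ j ∈ β.support,
          (β j : ℝ) * ((β - Finsupp.single j 1).prod fun i n => M i s ^ n) * m j s)
        + (β.prod fun i n => M i s ^ n) * m k s := by
  set α := β + Finsupp.single k 1 with hα
  set X : ℕ → ℝ := fun j => ((α - Finsupp.single j 1).prod fun i n => M i s ^ n) * m j s with hX
  have hαapp : ∀ j, α j = β j + if k = j then 1 else 0 := fun j => by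
    rw [hα, Finsupp.add_apply, Finsupp.single_apply]
  have hksup : k ∈ α.support := by
    simp [Finsupp.mem_support_iff, hαapp k]
  have hsub : β.support ⊆ α.support := fun j hj => by
    rw [Finsupp.mem_support_iff] at *
    have := hαapp j
    omega
  have hαk : α - Finsupp.single k 1 = β := by
    ext i
    rw [hα]
    simp only [Finsupp.tsub_apply, Finsupp.add_apply, Finsupp.single_apply]
    omega
  calc (∑ j ∈ α.support, ((α j : ℕ) : ℝ)
          * ((α - Finsupp.single j 1).prod fun i n => M i s ^ n) * m j s)
      = ∑ j ∈ α.support, ((β j : ℝ) * X j + (if k = j then (1:ℝ) else 0) * X j) := by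
        refine Finset.sum_congr rfl fun j _ => ?_
        simp only [hX]
        rw [hαapp j]
        push_cast
        ring
    _ = (∑ j ∈ α.support, (β j : ℝ) * X j)
          + ∑ j ∈ α.support, (if k = j then (1:ℝ) else 0) * X j := Finset.sum_add_distrib
    _ = (∑ j ∈ β.support, (β j : ℝ) * X j) + X k := by
        congr 1
        · exact (Finset.sum_subset hsub fun j _ hj => by
            simp [Finsupp.notMem_support_iff.1 hj]).symm
        · simp only [ite_mul, one_mul, zero_mul]
          rw [Finset.sum_ite_eq α.support k X, if_pos hksup]
    _ = M k s * (∑ j ∈ β.support,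
          (β j : ℝ) * ((β - Finsupp.single j 1).prod fun i n => M i s ^ n) * m j s)
        + (β.prod fun i n => M i s ^ n) * m k s := by
        rw [Finset.mul_sum, hX]
        congr 1
        · refine Finset.sum_congr rfl fun j hj => ?_
          simp only [hX]
          rw [hα, aux_sub_swap β j k hj, Qadd, Qsingle]
          ring
        · simp only [hX]
          rw [hαk]

lemma main_rep (T : ℝ) (mt Mt : ℕ → ℝ → ℝ) (hmt : ∀ k, IntegrableOn (mt k) (Ioo 0 T))
    (hMt : ∀ k t, Mt k t = ∫ s in Ioo 0 t, mt k s) :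
    ∀ (N : ℕ) (α : ℕ →₀ ℕ), α ≠ 0 → (α.sum fun _ n => n) ≤ N →
      RepOn T (fun t => α.prod fun i n => Mt i t ^ n)
        (fun s => ∑ j ∈ α.support, ((α j : ℕ) : ℝ)
            * ((α - Finsupp.single j 1).prod fun i n => Mt i s ^ n) * mt j s) := by
  intro N
  induction N with
  | zero =>
    intro α hα h0
    exfalso
    apply hα
    have hz : ∀ j ∈ α.support, α j = 0 :=
      Finset.sum_eq_zero_iff.1 (Nat.le_zero.1 h0)
    ext j
    by_cases hj : j ∈ α.support
    · exact hz j hj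
    · exact Finsupp.notMem_support_iff.1 hj
  | succ N ih =>
    intro α hα hsum
    obtain ⟨k, hk⟩ := Finsupp.support_nonempty_iff.2 hα
    set β := α - Finsupp.single k 1 with hβdef
    have hαβ : α = β + Finsupp.single k 1 := (aux_sub_add α k hk).symm
    by_cases hβ : β = 0
    · have hH : (fun t => α.prod fun i n => Mt i t ^ n) = Mt k :=
        funext fun t => by rw [hαβ, hβ, zero_add, Qsingle]
      have hd : (fun s => ∑ j ∈ α.support, ((α j : ℕ) : ℝ)
            * ((α - Finsupp.single j 1).prod fun i n => Mt i s ^ n) * mt j s) = mt k := by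
        funext s
        rw [hαβ, hβ, zero_add]
        simp [Finsupp.support_single_ne_zero k one_ne_zero, Finsupp.prod_zero_index]
      rw [hH, hd]
      exact ⟨hmt k, fun t _ => hMt k t⟩
    · have hsum' : (β.sum fun _ n => n) ≤ N := by
        have : (α.sum fun _ n => n) = (β.sum fun _ n => n) + 1 := by
          rw [hαβ, Finsupp.sum_add_index' (fun _ => rfl) (fun _ _ _ => rfl),
            Finsupp.sum_single_index rfl]
        omega
      have hrepβ := ih β hβ hsum'
      have hrepk : RepOn T (Mt k) (mt k) := ⟨hmt k, fun t _ => hMt k t⟩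
      have key := hrepβ.mul hrepk
      have hH : (fun t => α.prod fun i n => Mt i t ^ n)
          = fun t => (β.prod fun i n => Mt i t ^ n) * Mt k t :=
        funext fun t => by rw [hαβ, Qadd, Qsingle]
      have hd : (fun s => ∑ j ∈ α.support, ((α j : ℕ) : ℝ)
            * ((α - Finsupp.single j 1).prod fun i n => Mt i s ^ n) * mt j s)
          = fun s => (β.prod fun i n => Mt i s ^ n) * mt k s
              + Mt k s * ∑ j ∈ β.support, ((β j : ℕ) : ℝ)
                  * ((β - Finsupp.single j 1).prod fun i n => Mt i s ^ n) * mt j s := by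
        funext s
        rw [hαβ, density_step]
        ring
      rw [hH, hd]
      exact key

lemma RepOn.mul_int {T : ℝ} {F f g : ℝ → ℝ} (hF : RepOn T F f)
    (hg : IntegrableOn g (Ioo 0 T)) :
    IntegrableOn (fun s => F s * g s) (Ioo 0 T) := by
  refine (prim_mul_integrable hF.1 hg).congr ?_
  refine (ae_restrict_iff' measurableSet_Ioo).2 (Filter.Eventually.of_forall fun s hs => ?_)
  simp only [hF.2 s hs.2.le]

lemma fact_step (α : ℕ →₀ ℕ) (k : ℕ) (hk : k ∈ α.support) :
    (α.prod fun _ n => n.factorial)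
      = α k * ((α - Finsupp.single k 1).prod fun _ n => n.factorial) := by
  set β := α - Finsupp.single k 1 with hβ
  have hαk : 1 ≤ α k := Nat.one_le_iff_ne_zero.2 (Finsupp.mem_support_iff.1 hk)
  have hβk : β k = α k - 1 := by
    rw [hβ]; simp [Finsupp.tsub_apply, Finsupp.single_apply]
  have hβj : ∀ j, j ≠ k → β j = α j := fun j hj => by
    rw [hβ]; simp [Finsupp.tsub_apply, Finsupp.single_apply, Ne.symm hj]
  have hsub : β.support ⊆ α.support := fun j hj => by
    rw [Finsupp.mem_support_iff] at *
    by_cases h : j = k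
    · subst h; omega
    · rwa [hβj j h] at hj
  have h1 : (β.prod fun _ n => n.factorial) = ∏ j ∈ α.support, (β j).factorial := by
    rw [Finsupp.prod]
    exact Finset.prod_subset hsub fun j _ hj => by
      rw [Finsupp.notMem_support_iff.1 hj]; rfl
  rw [Finsupp.prod, h1, ← Finset.mul_prod_erase α.support _ hk,
    ← Finset.mul_prod_erase α.support (fun j => (β j).factorial) hk, hβk]
  have herase : ∏ j ∈ α.support.erase k, (β j).factorial
      = ∏ j ∈ α.support.erase k, (α j).factorial :=
    Finset.prod_congr rfl fun j hj => by rw [hβj j (Finset.mem_erase.1 hj).1]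
  rw [herase, ← mul_assoc, Nat.mul_factorial_pred (by omega)]


/-- The chaos coefficients of the Wick exponential,
`u_α(t) = (Π_k M̃_k(t)^{α_k})/√(α!)` with `M̃_k(t) = ∫_0^t m̃_k(s) ds`, solve the
propagator system of the Itô–Skorokhod equation `u(t) = 1 + 𝔛_t^⋄(u)`: `u_𝟎 ≡ 1` and,
for `|α| ≥ 1` and every `t ∈ [0, T]`,
`u_α(t) = Σ_k √(α_k) ∫_0^t u_{α−ε_k}(s) m̃_k(s) ds`. -/
theorem wick_exponential_solves_propagator
    (T : ℝ) (hT : 0 < T) (mt : ℕ → ℝ → ℝ)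
    (hmt : ∀ k, MemLp (mt k) 2 (volume.restrict (Ioo 0 T)))
    (Mt : ℕ → ℝ → ℝ) (hMt : ∀ k t, Mt k t = ∫ s in Ioo 0 t, mt k s)
    (u : (ℕ →₀ ℕ) → ℝ → ℝ)
    (hu : ∀ α t, u α t =
      (∏ k ∈ α.support, (Mt k t) ^ (α k)) /
        Real.sqrt (∏ k ∈ α.support, (Nat.factorial (α k) : ℝ))) :
    (∀ t : ℝ, u 0 t = 1) ∧
    (∀ α : ℕ →₀ ℕ, α ≠ 0 → ∀ t ∈ Icc (0 : ℝ) T,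
      u α t = ∑ k ∈ α.support, Real.sqrt (α k) *
        ∫ s in Ioo 0 t, u (α - Finsupp.single k 1) s * mt k s) := by
  have hfin : IsFiniteMeasure (volume.restrict (Ioo 0 T)) := ⟨by
    rw [Measure.restrict_apply_univ, Real.volume_Ioo]; exact ENNReal.ofReal_lt_top⟩
  have hmtInt : ∀ k, IntegrableOn (mt k) (Ioo 0 T) := fun k =>
    (hmt k).integrable (by norm_num)
  constructor
  · intro t
    rw [hu]
    simp
  · intro α hα t ht
    have hrep := main_rep T mt Mt hmtInt hMt (α.sum fun _ n => n) α hα le_rfl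
    have hQ := hrep.2 t ht.2
    simp only [mul_assoc] at hQ
    have hint : ∀ j ∈ α.support, IntegrableOn
        (fun s => ((α - Finsupp.single j 1).prod fun i n => Mt i s ^ n) * mt j s)
        (Ioo 0 t) := by
      intro j _
      have base : IntegrableOn
          (fun s => ((α - Finsupp.single j 1).prod fun i n => Mt i s ^ n) * mt j s)
          (Ioo 0 T) := by
        by_cases h0 : α - Finsupp.single j 1 = 0
        · rw [h0]
          simpa [Finsupp.prod_zero_index] using hmtInt j
        · exact (main_rep T mt Mt hmtInt hMt _ _ h0 le_rfl).mul_int (hmtInt j)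
      exact base.mono_set (Ioo_subset_Ioo le_rfl ht.2)
    have key : (α.prod fun i n => Mt i t ^ n) = ∑ j ∈ α.support, ((α j : ℕ) : ℝ)
        * ∫ s in Ioo 0 t,
          ((α - Finsupp.single j 1).prod fun i n => Mt i s ^ n) * mt j s := by
      rw [hQ, integral_finset_sum α.support fun j hj => (hint j hj).const_mul _]
      exact Finset.sum_congr rfl fun j _ => integral_const_mul _ _
    have hprodcast : ∀ γ : ℕ →₀ ℕ, (∏ k ∈ γ.support, (Nat.factorial (γ k) : ℝ))
        = ((γ.prod fun _ n => n.factorial : ℕ) : ℝ) := fun γ => by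
      rw [Finsupp.prod, Nat.cast_prod]
    rw [hu]
    have hQdef : (∏ k ∈ α.support, (Mt k t) ^ (α k)) = α.prod fun i n => Mt i t ^ n := rfl
    rw [hQdef, key, Finset.sum_div]
    refine Finset.sum_congr rfl fun k hk => ?_
    set β := α - Finsupp.single k 1 with hβ
    have hαk : 1 ≤ α k := Nat.one_le_iff_ne_zero.2 (Finsupp.mem_support_iff.1 hk)
    have hfactβ : (0:ℝ) < ((β.prod fun _ n => n.factorial : ℕ) : ℝ) := by
      have : 0 < (β.prod fun _ n => n.factorial : ℕ) := by
        rw [Finsupp.prod]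
        exact Finset.prod_pos fun j _ => Nat.factorial_pos _
      exact_mod_cast this
    have hIk : ∫ s in Ioo 0 t, u β s * mt k s
        = (∫ s in Ioo 0 t, (β.prod fun i n => Mt i s ^ n) * mt k s)
            / Real.sqrt ((β.prod fun _ n => n.factorial : ℕ) : ℝ) := by
      rw [← integral_div]
      refine setIntegral_congr_fun measurableSet_Ioo fun s _ => ?_
      rw [hu, hprodcast]
      have : (∏ j ∈ β.support, (Mt j s) ^ (β j)) = β.prod fun i n => Mt i s ^ n := rfl
      rw [this, div_mul_eq_mul_div]
    rw [hIk, hprodcast, fact_step α k hk, ← hβ]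
    set I := ∫ s in Ioo 0 t, (β.prod fun i n => Mt i s ^ n) * mt k s
    set Fb := ((β.prod fun _ n => n.factorial : ℕ) : ℝ)
    have hak : (0:ℝ) < (α k : ℝ) := by exact_mod_cast hαk
    have hsa : Real.sqrt (α k : ℝ) ≠ 0 := ne_of_gt (Real.sqrt_pos.2 hak)
    have hsb : Real.sqrt Fb ≠ 0 := ne_of_gt (Real.sqrt_pos.2 hfactβ)
    rw [Nat.cast_mul]
    rw [Real.sqrt_mul hak.le]
    rw [div_eq_iff (mul_ne_zero hsa hsb)]
    have : (α k : ℝ) = Real.sqrt (α k : ℝ) * Real.sqrt (α k : ℝ) :=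
      (Real.mul_self_sqrt hak.le).symm
    have h2 : Real.sqrt (α k) * (I / Real.sqrt Fb) * (Real.sqrt (α k) * Real.sqrt Fb)
        = (Real.sqrt (α k) * Real.sqrt (α k)) * I * (Real.sqrt Fb / Real.sqrt Fb) := by
      ring
    rw [h2, div_self hsb, mul_one, ← this]
end
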